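/- arXiv:2308.07742 — 2 statements merged into one kernel-verified Lean document; each statement's English description precedes it below -/
import Mathlib

section
/- Let W : ℝ² → ℝ² be continuously differentiable with compact support, let Δ ⊂ ℝ² be a bounded measurable set, and let v, φ : ℝ × ℝ² → ℝ² be twice continuously differentiable. Write v = v(0, ·), φ = φ(0, ·), v̇(x) = d/dt|_{t=0} v(t, F_t(x)), φ̇(x) = d/dt|_{t=0} φ(t, F_t(x)). Then the map t ↦ ∫_{F_t(Δ)} ((v(t,·)(y) · ∇) v(t,·)(y)) · φ(t,·)(y) dy is differentiable at t = 0 and its derivative equals ∫_Δ [ ((v̇(x) · ∇)v(x)) · φ(x) + ((v(x) · ∇)v̇(x)) · φ(x) − (((∇W(x) v(x)) · ∇)v(x)) · φ(x) + ((v(x) · ∇)v(x)) · φ̇(x) + div W(x) · ((v(x) · ∇)v(x)) · φ(x) ] dx. -/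
open MeasureTheory
open scoped RealInnerProductSpace

/-- Jacobian matrix of a vector field on `ℝ²`: `(jac v x) i j = ∂ v_i / ∂ x_j`. -/
noncomputable def jac (v : EuclideanSpace ℝ (Fin 2) → EuclideanSpace ℝ (Fin 2))
    (x : EuclideanSpace ℝ (Fin 2)) : Matrix (Fin 2) (Fin 2) ℝ :=
  Matrix.of fun i j => fderiv ℝ v x (EuclideanSpace.single j (1 : ℝ)) i

/-- Divergence of a vector field: the trace of its Jacobian. -/
noncomputable def divg (v : EuclideanSpace ℝ (Fin 2) → EuclideanSpace ℝ (Fin 2))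
    (x : EuclideanSpace ℝ (Fin 2)) : ℝ :=
  Matrix.trace (jac v x)

/-- Convective derivative `(a · ∇)v` at `x`, i.e. `∇v(x) a`. -/
noncomputable def conv (a : EuclideanSpace ℝ (Fin 2))
    (v : EuclideanSpace ℝ (Fin 2) → EuclideanSpace ℝ (Fin 2))
    (x : EuclideanSpace ℝ (Fin 2)) : EuclideanSpace ℝ (Fin 2) :=
  fderiv ℝ v x a

/- ### Auxiliary machinery -/

abbrev E2' := EuclideanSpace ℝ (Fin 2)

/-- Restriction of a continuous linear map on `ℝ × E2'` to the second factor. -/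
noncomputable def Rmap : ((ℝ × E2') →L[ℝ] E2') →L[ℝ] (E2' →L[ℝ] E2') :=
  (ContinuousLinearMap.compL ℝ E2' (ℝ × E2') E2').flip (ContinuousLinearMap.inr ℝ ℝ E2')

lemma Rmap_apply (L : (ℝ × E2') →L[ℝ] E2') (u : E2') : Rmap L u = L (0, u) := rfl

lemma fderiv_partial (v : ℝ × E2' → E2') (hv : Differentiable ℝ v) (t : ℝ) (y : E2') :
    fderiv ℝ (fun z => v (t, z)) y = Rmap (fderiv ℝ v (t, y)) :=
  ((hv (t, y)).hasFDerivAt.comp y (hasFDerivAt_prodMk_right t y)).fderiv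

noncomputable def ee (i : Fin 2) : E2' := EuclideanSpace.single i (1:ℝ)

lemma divg_eq (W : E2' → E2') (x : E2') :
    divg W x = fderiv ℝ W x (ee 0) 0 + fderiv ℝ W x (ee 1) 1 := by
  rw [divg, Matrix.trace_fin_two]; rfl

lemma clm_det_eq (B : E2' →L[ℝ] E2') (t : ℝ) :
    (ContinuousLinearMap.id ℝ E2' + t • B).det
      = 1 + t * (B (ee 0) 0 + B (ee 1) 1)
        + t^2 * (B (ee 0) 0 * B (ee 1) 1 - B (ee 1) 0 * B (ee 0) 1) := by
  classical
  set b := (EuclideanSpace.basisFun (Fin 2) ℝ).toBasis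
  have hdet : (ContinuousLinearMap.id ℝ E2' + t • B).det
      = (LinearMap.toMatrix b b ((ContinuousLinearMap.id ℝ E2' + t • B : E2' →L[ℝ] E2') :
          E2' →ₗ[ℝ] E2')).det := by
    rw [LinearMap.det_toMatrix]
  rw [hdet]
  have hentry : ∀ (L : E2' →L[ℝ] E2') (i j : Fin 2),
      LinearMap.toMatrix b b (L : E2' →ₗ[ℝ] E2') i j = L (ee j) i := by
    intro L i j
    rw [LinearMap.toMatrix_apply]
    simp [b, ee, EuclideanSpace.basisFun_apply]
  rw [Matrix.det_fin_two]
  have h00 := hentry (ContinuousLinearMap.id ℝ E2' + t • B) 0 0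
  have h01 := hentry (ContinuousLinearMap.id ℝ E2' + t • B) 0 1
  have h10 := hentry (ContinuousLinearMap.id ℝ E2' + t • B) 1 0
  have h11 := hentry (ContinuousLinearMap.id ℝ E2' + t • B) 1 1
  rw [h00, h01, h10, h11]
  have hid : ∀ (i j : Fin 2), (ContinuousLinearMap.id ℝ E2') (ee j) i = if i = j then 1 else 0 := by
    intro i j
    simp [ee, EuclideanSpace.single_apply]
  simp only [ContinuousLinearMap.add_apply, ContinuousLinearMap.smul_apply, hid]
  simp only [PiLp.add_apply, PiLp.smul_apply, smul_eq_mul]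
  simp [ee, EuclideanSpace.single_apply]
  ring

lemma curve_hasDerivAt (W : E2' → E2') (x : E2') (t : ℝ) :
    HasDerivAt (fun s : ℝ => ((s, x + s • W x) : ℝ × E2')) (1, W x) t := by
  have h1 : HasDerivAt (fun s : ℝ => x + s • W x) (W x) t := by
    simpa using ((hasDerivAt_id t).smul_const (W x)).const_add x
  exact (hasDerivAt_id t).prodMk h1

lemma comp_curve' {G : Type*} [NormedAddCommGroup G] [NormedSpace ℝ G] (f : ℝ × E2' → G)
    (hf : Differentiable ℝ f) (W : E2' → E2') (x : E2') (t : ℝ) :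
    HasDerivAt (fun s : ℝ => f (s, x + s • W x)) (fderiv ℝ f (t, x + t • W x) (1, W x)) t :=
  (hf (t, x + t • W x)).hasFDerivAt.comp_hasDerivAt t (curve_hasDerivAt W x t)

lemma comp_curve {G : Type*} [NormedAddCommGroup G] [NormedSpace ℝ G] (f : ℝ × E2' → G)
    (hf : Differentiable ℝ f) (W : E2' → E2') (x : E2') :
    HasDerivAt (fun s : ℝ => f (s, x + s • W x)) (fderiv ℝ f (0, x) (1, W x)) 0 := by
  have hl : HasFDerivAt f (fderiv ℝ f (0, x))
      ((fun s : ℝ => ((s, x + s • W x) : ℝ × E2')) 0) := by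
    show HasFDerivAt f (fderiv ℝ f (0, x)) ((0:ℝ), x + (0:ℝ) • W x)
    rw [zero_smul, add_zero]
    exact (hf (0, x)).hasFDerivAt
  exact hl.comp_hasDerivAt 0 (curve_hasDerivAt W x 0)

lemma hfun_contDiff (v φ : ℝ × E2' → E2') (hv : ContDiff ℝ 2 v) (hφ : ContDiff ℝ 2 φ) :
    ContDiff ℝ 1 (fun p : ℝ × E2' => ⟪(Rmap (fderiv ℝ v p)) (v p), φ p⟫) := by
  have h1 : ContDiff ℝ 1 (fderiv ℝ v) := hv.fderiv_right (by norm_num)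
  have hA : ContDiff ℝ 1 (fun p => Rmap (fderiv ℝ v p)) := Rmap.contDiff.comp h1
  exact (hA.clm_apply (hv.of_le one_le_two)).inner ℝ (hφ.of_le one_le_two)

noncomputable def tauW (W : E2' → E2') (x : E2') : ℝ :=
  fderiv ℝ W x (ee 0) 0 + fderiv ℝ W x (ee 1) 1

noncomputable def sigW (W : E2' → E2') (x : E2') : ℝ :=
  fderiv ℝ W x (ee 0) 0 * fderiv ℝ W x (ee 1) 1
    - fderiv ℝ W x (ee 1) 0 * fderiv ℝ W x (ee 0) 1

noncomputable def hfnF (v φ : ℝ × E2' → E2') (p : ℝ × E2') : ℝ :=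
  ⟪(Rmap (fderiv ℝ v p)) (v p), φ p⟫

noncomputable def gfun (W : E2' → E2') (v φ : ℝ × E2' → E2') (t : ℝ) (x : E2') : ℝ :=
  hfnF v φ (t, x + t • W x) * (1 + t * tauW W x + t^2 * sigW W x)

noncomputable def g'fun (W : E2' → E2') (v φ : ℝ × E2' → E2') (t : ℝ) (x : E2') : ℝ :=
  (fderiv ℝ (hfnF v φ) (t, x + t • W x)) (1, W x) * (1 + t * tauW W x + t^2 * sigW W x)
    + hfnF v φ (t, x + t • W x) * (tauW W x + 2*t*sigW W x)

lemma inj_of_small {W : E2' → E2'} {L : NNReal} (hL : LipschitzWith L W) {t : ℝ}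
    (ht : |t| * (L : ℝ) < 1) : Function.Injective (fun x : E2' => x + t • W x) := by
  intro x y hxy
  simp only at hxy
  have h1 : x - y = t • (W y - W x) := by
    calc x - y = (x + t • W x) - (y + t • W y) + t • W y - t • W x := by abel
      _ = t • W y - t • W x := by rw [hxy]; abel
      _ = t • (W y - W x) := (smul_sub t _ _).symm
  have hWlip : ‖W y - W x‖ ≤ (L : ℝ) * ‖x - y‖ := by
    have := hL.dist_le_mul y x
    rw [dist_eq_norm, dist_eq_norm] at this
    simpa [norm_sub_rev (y : E2') x] using this
  have h2 : ‖x - y‖ ≤ |t| * ((L : ℝ) * ‖x - y‖) := by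
    calc ‖x - y‖ = |t| * ‖W y - W x‖ := by rw [h1, norm_smul, Real.norm_eq_abs]
      _ ≤ |t| * ((L : ℝ) * ‖x - y‖) := mul_le_mul_of_nonneg_left hWlip (abs_nonneg t)
  by_contra hne
  have hpos : 0 < ‖x - y‖ := by
    rw [norm_pos_iff, sub_ne_zero]
    exact fun h => hne (by rw [h])
  nlinarith [abs_nonneg t]

lemma key_pointwise (W : E2' → E2') (hW : ContDiff ℝ 1 W)
    (v φ : ℝ × E2' → E2') (hv : ContDiff ℝ 2 v) (hφ : ContDiff ℝ 2 φ)
    (v₀ vdot φ₀ φdot : E2' → E2')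
    (hv₀ : v₀ = fun z => v ((0 : ℝ), z))
    (hvdot : vdot = fun z => deriv (fun t : ℝ => v (t, z + t • W z)) 0)
    (hφ₀ : φ₀ = fun z => φ ((0 : ℝ), z))
    (hφdot : φdot = fun z => deriv (fun t : ℝ => φ (t, z + t • W z)) 0)
    (x : E2') :
    (fderiv ℝ (fun p : ℝ × E2' => ⟪(Rmap (fderiv ℝ v p)) (v p), φ p⟫) (0, x)) (1, W x)
      + ⟪(Rmap (fderiv ℝ v (0, x))) (v (0, x)), φ (0, x)⟫
        * (fderiv ℝ W x (ee 0) 0 + fderiv ℝ W x (ee 1) 1)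
    = ⟪conv (vdot x) v₀ x, φ₀ x⟫
        + ⟪conv (v₀ x) vdot x, φ₀ x⟫
        - ⟪conv (conv (v₀ x) W x) v₀ x, φ₀ x⟫
        + ⟪conv (v₀ x) v₀ x, φdot x⟫
        + divg W x * ⟪conv (v₀ x) v₀ x, φ₀ x⟫ := by
  have hWd : Differentiable ℝ W := hW.differentiable one_ne_zero
  have hvd : Differentiable ℝ v := hv.differentiable two_ne_zero
  have hφd : Differentiable ℝ φ := hφ.differentiable two_ne_zero
  have h1 : ContDiff ℝ 1 (fderiv ℝ v) := hv.fderiv_right (by norm_num)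
  have hb' : HasFDerivAt (fderiv ℝ v) (fderiv ℝ (fderiv ℝ v) (0, x)) (0, x) :=
    ((h1.differentiable one_ne_zero) (0, x)).hasFDerivAt
  set f'' := fderiv ℝ (fderiv ℝ v) (0, x) with hf''def
  have hm : HasDerivAt (fun s : ℝ => v (s, x + s • W x)) (fderiv ℝ v (0, x) (1, W x)) 0 :=
    comp_curve v hvd W x
  have hp : HasDerivAt (fun s : ℝ => φ (s, x + s • W x)) (fderiv ℝ φ (0, x) (1, W x)) 0 :=
    comp_curve φ hφd W x
  have hvdx : vdot x = fderiv ℝ v (0, x) (1, W x) := by rw [hvdot]; exact hm.deriv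
  have hpdx : φdot x = fderiv ℝ φ (0, x) (1, W x) := by rw [hφdot]; exact hp.deriv
  have hA0 : HasDerivAt (fun s : ℝ => fderiv ℝ v (s, x + s • W x)) (f'' (1, W x)) 0 := by
    simpa [hf''def] using comp_curve (fderiv ℝ v) (h1.differentiable one_ne_zero) W x
  have hA : HasDerivAt (fun s : ℝ => Rmap (fderiv ℝ v (s, x + s • W x)))
      (Rmap (f'' (1, W x))) 0 := Rmap.hasFDerivAt.comp_hasDerivAt 0 hA0
  have hH : HasDerivAt
      (fun s : ℝ => ⟪(Rmap (fderiv ℝ v (s, x + s • W x))) (v (s, x + s • W x)),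
        φ (s, x + s • W x)⟫)
      (⟪(Rmap (fderiv ℝ v ((0:ℝ), x + (0:ℝ) • W x))) (v ((0:ℝ), x + (0:ℝ) • W x)),
          fderiv ℝ φ (0, x) (1, W x)⟫
        + ⟪(Rmap (f'' (1, W x))) (v ((0:ℝ), x + (0:ℝ) • W x))
            + (Rmap (fderiv ℝ v ((0:ℝ), x + (0:ℝ) • W x))) (fderiv ℝ v (0, x) (1, W x)),
          φ ((0:ℝ), x + (0:ℝ) • W x)⟫) 0 :=
    (hA.clm_apply hm).inner ℝ hp
  simp only [zero_smul, add_zero] at hH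
  have hH' : HasDerivAt
      (fun s : ℝ => ⟪(Rmap (fderiv ℝ v (s, x + s • W x))) (v (s, x + s • W x)),
        φ (s, x + s • W x)⟫)
      ((fderiv ℝ (fun p : ℝ × E2' => ⟪(Rmap (fderiv ℝ v p)) (v p), φ p⟫) (0, x)) (1, W x)) 0 :=
    comp_curve _ ((hfun_contDiff v φ hv hφ).differentiable one_ne_zero) W x
  have key : (fderiv ℝ (fun p : ℝ × E2' => ⟪(Rmap (fderiv ℝ v p)) (v p), φ p⟫) (0, x)) (1, W x)
      = ⟪(Rmap (fderiv ℝ v (0, x))) (v (0, x)), fderiv ℝ φ (0, x) (1, W x)⟫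
        + ⟪(Rmap (f'' (1, W x))) (v (0, x))
            + (Rmap (fderiv ℝ v (0, x))) (fderiv ℝ v (0, x) (1, W x)), φ (0, x)⟫ :=
    hH'.unique hH
  have hvdfun : vdot = fun z => fderiv ℝ v (0, z) (1, W z) := by
    rw [hvdot]; funext z; exact (comp_curve v hvd W z).deriv
  have hB : HasFDerivAt (fun z => fderiv ℝ v (0, z))
      (f''.comp (ContinuousLinearMap.inr ℝ ℝ E2')) x :=
    hb'.comp x (hasFDerivAt_prodMk_right (0:ℝ) x)
  have hu : HasFDerivAt (fun z : E2' => (((1:ℝ), W z) : ℝ × E2'))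
      ((0 : E2' →L[ℝ] ℝ).prod (fderiv ℝ W x)) x :=
    (hasFDerivAt_const (1:ℝ) x).prodMk (hWd x).hasFDerivAt
  have hvdF : HasFDerivAt vdot
      ((fderiv ℝ v (0, x)).comp ((0 : E2' →L[ℝ] ℝ).prod (fderiv ℝ W x))
        + (f''.comp (ContinuousLinearMap.inr ℝ ℝ E2')).flip ((1:ℝ), W x)) x := by
    rw [hvdfun]; exact hB.clm_apply hu
  have hconv1 : conv (v₀ x) vdot x
      = fderiv ℝ v (0, x) (0, fderiv ℝ W x (v₀ x)) + f'' (0, v₀ x) (1, W x) := by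
    rw [conv, hvdF.fderiv]
    simp [ContinuousLinearMap.prod_apply]
  have hsymm : f'' (0, v₀ x) (1, W x) = f'' (1, W x) ((0 : ℝ), v₀ x) :=
    second_derivative_symmetric (fun y => (hvd y).hasFDerivAt) hb' _ _
  have hconv2 : conv (conv (v₀ x) W x) v₀ x = fderiv ℝ v (0, x) (0, fderiv ℝ W x (v₀ x)) := by
    rw [hv₀, conv, fderiv_partial v hvd 0 x]
    rfl
  have hconv3 : conv (vdot x) v₀ x = (Rmap (fderiv ℝ v (0, x))) (vdot x) := by
    rw [hv₀, conv, fderiv_partial v hvd 0 x]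
  have hconv4 : conv (v₀ x) v₀ x = (Rmap (fderiv ℝ v (0, x))) (v (0, x)) := by
    rw [hv₀, conv, fderiv_partial v hvd 0 x]
  have hv0x : v₀ x = v (0, x) := by rw [hv₀]
  have hφ0x : φ₀ x = φ (0, x) := by rw [hφ₀]
  rw [key, divg_eq]
  rw [hconv3, hconv4, hφ0x, hpdx, hvdx]
  have hmid : ⟪conv (v₀ x) vdot x, φ (0, x)⟫ - ⟪conv (conv (v₀ x) W x) v₀ x, φ (0, x)⟫
      = ⟪(Rmap (f'' (1, W x))) (v (0, x)), φ (0, x)⟫ := by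
    rw [← inner_sub_left, hconv1, hconv2, add_sub_cancel_left, hsymm, Rmap_apply, hv0x]
  rw [inner_add_left]
  rw [hv0x] at hmid ⊢
  linarith [hmid]

set_option maxHeartbeats 2000000 in
/-- Shape derivative of the convective term
`t ↦ ∫_{F_t(Δ)} ((v(t,·) · ∇) v(t,·)) · φ(t,·) dy`. -/
theorem shape_derivative_L3
    (W : EuclideanSpace ℝ (Fin 2) → EuclideanSpace ℝ (Fin 2))
    (hW : ContDiff ℝ 1 W) (hWc : HasCompactSupport W)
    (Δ : Set (EuclideanSpace ℝ (Fin 2))) (hΔm : MeasurableSet Δ)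
    (hΔb : Bornology.IsBounded Δ)
    (v φ : ℝ × EuclideanSpace ℝ (Fin 2) → EuclideanSpace ℝ (Fin 2))
    (hv : ContDiff ℝ 2 v) (hφ : ContDiff ℝ 2 φ)
    (v₀ vdot φ₀ φdot : EuclideanSpace ℝ (Fin 2) → EuclideanSpace ℝ (Fin 2))
    (hv₀ : v₀ = fun z => v ((0 : ℝ), z))
    (hvdot : vdot = fun z => deriv (fun t : ℝ => v (t, z + t • W z)) 0)
    (hφ₀ : φ₀ = fun z => φ ((0 : ℝ), z))
    (hφdot : φdot = fun z => deriv (fun t : ℝ => φ (t, z + t • W z)) 0) :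
    HasDerivAt
      (fun t : ℝ => ∫ y in (fun x => x + t • W x) '' Δ,
        ⟪conv (v (t, y)) (fun z => v (t, z)) y, φ (t, y)⟫)
      (∫ x in Δ,
        (⟪conv (vdot x) v₀ x, φ₀ x⟫
          + ⟪conv (v₀ x) vdot x, φ₀ x⟫
          - ⟪conv (conv (v₀ x) W x) v₀ x, φ₀ x⟫
          + ⟪conv (v₀ x) v₀ x, φdot x⟫
          + divg W x * ⟪conv (v₀ x) v₀ x, φ₀ x⟫)) (0 : ℝ) := by
  classical
  have hWd : Differentiable ℝ W := hW.differentiable one_ne_zero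
  have hvd : Differentiable ℝ v := hv.differentiable two_ne_zero
  have hDWc : Continuous fun x => fderiv ℝ W x := hW.continuous_fderiv one_ne_zero
  have hτdef : ∀ x, tauW W x = fderiv ℝ W x (ee 0) 0 + fderiv ℝ W x (ee 1) 1 := fun _ => rfl
  have hσdef : ∀ x, sigW W x = fderiv ℝ W x (ee 0) 0 * fderiv ℝ W x (ee 1) 1
    - fderiv ℝ W x (ee 1) 0 * fderiv ℝ W x (ee 0) 1 := fun _ => rfl
  set τ : E2' → ℝ := tauW W with hτs
  set σ : E2' → ℝ := sigW W with hσs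
  set hfn : ℝ × E2' → ℝ := hfnF v φ with hhfns
  set g : ℝ → E2' → ℝ := gfun W v φ with hgs
  set g' : ℝ → E2' → ℝ := g'fun W v φ with hg's
  have hgeq : ∀ t x, g t x = hfn (t, x + t • W x) * (1 + t * τ x + t^2 * σ x) := fun _ _ => rfl
  have hg'eq : ∀ t x, g' t x =
    (fderiv ℝ hfn (t, x + t • W x)) (1, W x) * (1 + t * τ x + t^2 * σ x)
      + hfn (t, x + t • W x) * (τ x + 2*t*σ x) := fun _ _ => rfl
  have hτeq : ∀ x, τ x = fderiv ℝ W x (ee 0) 0 + fderiv ℝ W x (ee 1) 1 := fun _ => rfl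
  have hσeq : ∀ x, σ x = fderiv ℝ W x (ee 0) 0 * fderiv ℝ W x (ee 1) 1
    - fderiv ℝ W x (ee 1) 0 * fderiv ℝ W x (ee 0) 1 := fun _ => rfl
  have hfneq : ∀ p, hfn p = ⟪(Rmap (fderiv ℝ v p)) (v p), φ p⟫ := fun _ => rfl
  -- continuity facts
  have hEnt : ∀ i j : Fin 2, Continuous fun x => fderiv ℝ W x (ee i) j := by
    intro i j
    exact (EuclideanSpace.proj j).continuous.comp
      ((ContinuousLinearMap.apply ℝ E2' (ee i)).continuous.comp hDWc)
  have hτc : Continuous τ := (hEnt 0 0).add (hEnt 1 1)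
  have hσc : Continuous σ := ((hEnt 0 0).mul (hEnt 1 1)).sub ((hEnt 1 0).mul (hEnt 0 1))
  have hhc : ContDiff ℝ 1 hfn := hfun_contDiff v φ hv hφ
  have hfnc : Continuous hfn := hhc.continuous
  have hfdc : Continuous (fderiv ℝ hfn) := hhc.continuous_fderiv one_ne_zero
  have hFc : Continuous fun p : ℝ × E2' => p.2 + p.1 • W p.2 :=
    continuous_snd.add (continuous_fst.smul (hW.continuous.comp continuous_snd))
  have hpolyc : Continuous fun p : ℝ × E2' => 1 + p.1 * τ p.2 + p.1^2 * σ p.2 :=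
    (continuous_const.add (continuous_fst.mul (hτc.comp continuous_snd))).add
      ((continuous_fst.pow 2).mul (hσc.comp continuous_snd))
  have hgc : Continuous fun p : ℝ × E2' => g p.1 p.2 :=
    (hfnc.comp (continuous_fst.prodMk hFc)).mul hpolyc
  have hg'c : Continuous fun p : ℝ × E2' => g' p.1 p.2 := by
    apply Continuous.add
    · exact (isBoundedBilinearMap_apply.continuous.comp
        ((hfdc.comp (continuous_fst.prodMk hFc)).prodMk
          (continuous_const.prodMk (hW.continuous.comp continuous_snd)))).mul hpolyc
    · exact (hfnc.comp (continuous_fst.prodMk hFc)).mul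
        ((hτc.comp continuous_snd).add
          ((continuous_const.mul continuous_fst).mul (hσc.comp continuous_snd)))
  -- the pointwise derivative in `t`
  have hder : ∀ (x : E2') (t : ℝ), HasDerivAt (fun s => g s x) (g' t x) t := by
    intro x t
    have h1 : HasDerivAt (fun s : ℝ => hfn (s, x + s • W x))
        ((fderiv ℝ hfn (t, x + t • W x)) (1, W x)) t :=
      comp_curve' hfn (hhc.differentiable one_ne_zero) W x t
    have ha : HasDerivAt (fun s : ℝ => s * τ x) (τ x) t := by
      simpa using (hasDerivAt_id t).mul_const (τ x)
    have hb : HasDerivAt (fun s : ℝ => s^2 * σ x) (2*t*σ x) t := by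
      have h := (hasDerivAt_pow 2 t).mul_const (σ x)
      norm_num at h
      exact h
    have h2 : HasDerivAt (fun s : ℝ => 1 + s * τ x + s^2 * σ x) (τ x + 2*t*σ x) t :=
      (ha.const_add 1).add hb
    exact h1.mul h2
  -- Lipschitz constant and bounds
  obtain ⟨L, hL⟩ := hW.lipschitzWith_of_hasCompactSupport hWc one_ne_zero
  obtain ⟨C, hC⟩ := (hWc.fderiv ℝ).exists_bound_of_continuous hDWc
  have hCnn : 0 ≤ C := (norm_nonneg _).trans (hC 0)
  have hentbd : ∀ (x : E2') (i j : Fin 2), |fderiv ℝ W x (ee i) j| ≤ C := by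
    intro x i j
    have h1 : |fderiv ℝ W x (ee i) j| ≤ ‖fderiv ℝ W x (ee i)‖ := by
      have h2 : ⟪ee j, fderiv ℝ W x (ee i)⟫ = fderiv ℝ W x (ee i) j := by
        simp [ee, EuclideanSpace.inner_single_left]
      rw [← h2]
      have := abs_real_inner_le_norm (ee j) (fderiv ℝ W x (ee i))
      simpa [ee, EuclideanSpace.norm_single] using this
    refine h1.trans ?_
    calc ‖fderiv ℝ W x (ee i)‖ ≤ ‖fderiv ℝ W x‖ * ‖ee i‖ :=
          (fderiv ℝ W x).le_opNorm (ee i)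
      _ = ‖fderiv ℝ W x‖ := by simp [ee, EuclideanSpace.norm_single]
      _ ≤ C := hC x
  set M : ℝ := 2*C + 2*C^2 + 1 with hMdef
  have hM1 : (1:ℝ) ≤ M := by nlinarith [sq_nonneg C]
  have hMpos : (0:ℝ) < M := by linarith
  have hτbd : ∀ x, |τ x| ≤ M := by
    intro x
    rw [hτeq]
    calc |fderiv ℝ W x (ee 0) 0 + fderiv ℝ W x (ee 1) 1|
          ≤ |fderiv ℝ W x (ee 0) 0| + |fderiv ℝ W x (ee 1) 1| := abs_add_le _ _
      _ ≤ C + C := add_le_add (hentbd x 0 0) (hentbd x 1 1)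
      _ ≤ M := by rw [hMdef]; nlinarith [sq_nonneg C]
  have hσbd : ∀ x, |σ x| ≤ M := by
    intro x
    have h1 := hentbd x 0 0; have h2 := hentbd x 1 1
    have h3 := hentbd x 1 0; have h4 := hentbd x 0 1
    rw [hσeq]
    calc |fderiv ℝ W x (ee 0) 0 * fderiv ℝ W x (ee 1) 1
          - fderiv ℝ W x (ee 1) 0 * fderiv ℝ W x (ee 0) 1| ≤ |fderiv ℝ W x (ee 0) 0 * fderiv ℝ W x (ee 1) 1|
          + |fderiv ℝ W x (ee 1) 0 * fderiv ℝ W x (ee 0) 1| := abs_sub _ _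
      _ = |fderiv ℝ W x (ee 0) 0| * |fderiv ℝ W x (ee 1) 1|
          + |fderiv ℝ W x (ee 1) 0| * |fderiv ℝ W x (ee 0) 1| := by rw [abs_mul, abs_mul]
      _ ≤ C * C + C * C :=
          add_le_add
            (mul_le_mul (hentbd x 0 0) (hentbd x 1 1) (abs_nonneg _) hCnn)
            (mul_le_mul (hentbd x 1 0) (hentbd x 0 1) (abs_nonneg _) hCnn)
      _ ≤ M := by rw [hMdef]; nlinarith [hCnn]
  set t₀ : ℝ := min (1/(2*(L:ℝ)+2)) (1/(2*M)) with ht₀def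
  have ht₀pos : 0 < t₀ := lt_min (by positivity) (by positivity)
  have ht₀M : t₀ ≤ 1/(2*M) := min_le_right _ _
  have ht₀L : t₀ ≤ 1/(2*(L:ℝ)+2) := min_le_left _ _
  have ht₀le1 : t₀ ≤ 1 := by
    refine ht₀M.trans ?_
    rw [div_le_one (by linarith)]
    linarith
  have hδlb : ∀ t : ℝ, |t| ≤ t₀ → ∀ x, (1:ℝ)/4 ≤ 1 + t * τ x + t^2 * σ x := by
    intro t ht x
    have h1 : |t| ≤ 1/(2*M) := ht.trans ht₀M
    have ha : |t * τ x| ≤ |t| * M := by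
      rw [abs_mul]; exact mul_le_mul_of_nonneg_left (hτbd x) (abs_nonneg t)
    have hb : |t^2 * σ x| ≤ |t|^2 * M := by
      rw [abs_mul, abs_pow]
      exact mul_le_mul_of_nonneg_left (hσbd x) (by positivity)
    have h2 : |t| * M ≤ 1/2 := by
      have hmm := mul_le_mul_of_nonneg_right h1 (le_of_lt hMpos)
      have hee : (1/(2*M))*M = 1/2 := by field_simp
      linarith
    have h3 : |t|^2 * M ≤ 1/4 := by nlinarith [abs_nonneg t]
    nlinarith [neg_abs_le (t * τ x), neg_abs_le (t^2 * σ x)]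
  have hinj : ∀ t : ℝ, |t| ≤ t₀ → Function.Injective (fun x : E2' => x + t • W x) := by
    intro t ht
    apply inj_of_small hL
    have h1 : |t| ≤ 1/(2*(L:ℝ)+2) := ht.trans ht₀L
    have hLnn : (0:ℝ) ≤ (L:ℝ) := L.coe_nonneg
    have h2 : |t| * (L:ℝ) ≤ (1/(2*(L:ℝ)+2)) * (L:ℝ) :=
      mul_le_mul_of_nonneg_right h1 hLnn
    have h3 : (1/(2*(L:ℝ)+2)) * (L:ℝ) < 1 := by
      rw [div_mul_eq_mul_div, div_lt_one (by linarith)]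
      linarith
    linarith
  -- change of variables
  have hCoV : ∀ t : ℝ, |t| ≤ t₀ →
      (∫ y in (fun x => x + t • W x) '' Δ, hfn (t, y)) = ∫ x in Δ, g t x := by
    intro t ht
    have hfd' : ∀ x ∈ Δ, HasFDerivWithinAt (fun x : E2' => x + t • W x)
        (ContinuousLinearMap.id ℝ E2' + t • fderiv ℝ W x) Δ x := fun x _ =>
      ((hasFDerivAt_id x).add ((hWd x).hasFDerivAt.const_smul t)).hasFDerivWithinAt
    rw [integral_image_eq_integral_abs_det_fderiv_smul volume hΔm hfd' ((hinj t ht).injOn)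
      (fun y => hfn (t, y))]
    refine integral_congr_ae (Filter.Eventually.of_forall fun x => ?_)
    have hdet := clm_det_eq (fderiv ℝ W x) t
    have hpos : (0:ℝ) < 1 + t * τ x + t^2 * σ x :=
      lt_of_lt_of_le (by norm_num) (hδlb t ht x)
    show |(ContinuousLinearMap.id ℝ E2' + t • fderiv ℝ W x).det| • hfn (t, x + t • W x) = g t x
    rw [hdet]
    rw [abs_of_pos (by rw [hτeq, hσeq] at hpos; exact hpos)]
    rw [smul_eq_mul, hgeq, hτeq, hσeq]
    ring
  -- finiteness of the measure
  have hclos : IsCompact (closure Δ) :=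
    Metric.isCompact_of_isClosed_isBounded isClosed_closure hΔb.closure
  have hfin : volume Δ < ⊤ := hΔb.measure_lt_top
  haveI : IsFiniteMeasure (volume.restrict Δ) :=
    ⟨by rwa [Measure.restrict_apply_univ]⟩
  -- bounds on compacts
  obtain ⟨C₀, hC₀⟩ := hclos.exists_bound_of_continuousOn
    ((hgc.comp (continuous_const.prodMk continuous_id)).continuousOn :
      ContinuousOn (fun x : E2' => g 0 x) (closure Δ))
  obtain ⟨C₁, hC₁⟩ := ((isCompact_Icc (a := (-1:ℝ)) (b := 1)).prod hclos).exists_bound_of_continuousOn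
    (hg'c.continuousOn)
  -- differentiation under the integral sign
  have hmain := hasDerivAt_integral_of_dominated_loc_of_deriv_le
    (μ := volume.restrict Δ) (F := fun t x => g t x) (F' := fun t x => g' t x)
    (bound := fun _ => C₁) (x₀ := (0:ℝ)) (Metric.ball_mem_nhds (0:ℝ) ht₀pos)
    (Filter.Eventually.of_forall fun t =>
      ((hgc.comp ((continuous_const (y := t)).prodMk continuous_id)).aestronglyMeasurable))
    (by
      refine Integrable.mono' (integrable_const C₀)
        ((hgc.comp ((continuous_const (y := (0:ℝ))).prodMk continuous_id)).aestronglyMeasurable)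
        ?_
      exact (ae_restrict_mem hΔm).mono fun x hx => hC₀ x (subset_closure hx))
    ((hg'c.comp ((continuous_const (y := (0:ℝ))).prodMk continuous_id)).aestronglyMeasurable)
    (by
      refine (ae_restrict_mem hΔm).mono fun x hx t htb => ?_
      refine hC₁ (t, x) ⟨?_, subset_closure hx⟩
      have : |t| < t₀ := by simpa [Real.dist_eq] using htb
      constructor
      · linarith [neg_abs_le t]
      · linarith [le_abs_self t])
    (integrable_const C₁)
    (Filter.Eventually.of_forall fun x t _ => hder x t)
  have hd2 : HasDerivAt (fun t => ∫ x in Δ, g t x) (∫ x in Δ, g' 0 x) 0 := hmain.2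
  -- identify the derivative value
  have hpt : ∀ x : E2',
      (⟪conv (vdot x) v₀ x, φ₀ x⟫
        + ⟪conv (v₀ x) vdot x, φ₀ x⟫
        - ⟪conv (conv (v₀ x) W x) v₀ x, φ₀ x⟫
        + ⟪conv (v₀ x) v₀ x, φdot x⟫
        + divg W x * ⟪conv (v₀ x) v₀ x, φ₀ x⟫) = g' 0 x := by
    intro x
    have hk := key_pointwise W hW v φ hv hφ v₀ vdot φ₀ φdot hv₀ hvdot hφ₀ hφdot x
    rw [← hk]
    rw [hg'eq, hτeq]
    rw [show hfn = fun p : ℝ × E2' => ⟪(Rmap (fderiv ℝ v p)) (v p), φ p⟫ from rfl]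
    simp only [zero_smul, add_zero, zero_mul, mul_one, mul_zero]
    ring
  have hval : (∫ x in Δ,
      (⟪conv (vdot x) v₀ x, φ₀ x⟫
        + ⟪conv (v₀ x) vdot x, φ₀ x⟫
        - ⟪conv (conv (v₀ x) W x) v₀ x, φ₀ x⟫
        + ⟪conv (v₀ x) v₀ x, φdot x⟫
        + divg W x * ⟪conv (v₀ x) v₀ x, φ₀ x⟫)) = ∫ x in Δ, g' 0 x :=
    integral_congr_ae (Filter.Eventually.of_forall hpt)
  rw [hval]
  refine hd2.congr_of_eventuallyEq ?_
  have hball : ∀ᶠ t : ℝ in nhds 0, |t| ≤ t₀ := by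
    refine Filter.eventually_of_mem (Metric.ball_mem_nhds (0:ℝ) ht₀pos) fun t ht => ?_
    exact le_of_lt (by simpa [Real.dist_eq] using ht)
  refine hball.mono fun t ht => ?_
  show (∫ y in (fun x => x + t • W x) '' Δ,
      ⟪conv (v (t, y)) (fun z => v (t, z)) y, φ (t, y)⟫) = ∫ x in Δ, g t x
  rw [← hCoV t ht]
  refine integral_congr_ae (Filter.Eventually.of_forall fun y => ?_)
  show ⟪conv (v (t, y)) (fun z => v (t, z)) y, φ (t, y)⟫ = hfn (t, y)
  rw [conv, fderiv_partial v hvd t y]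
  rfl
end

section
/- Let W : ℝ² → ℝ² be continuously differentiable with compact support, let Δ ⊂ ℝ² be a bounded measurable set, let p : ℝ × ℝ² → ℝ and φ : ℝ × ℝ² → ℝ² be twice continuously differentiable. Write p = p(0, ·), φ = φ(0, ·), ṗ(x) = d/dt|_{t=0} p(t, F_t(x)), φ̇(x) = d/dt|_{t=0} φ(t, F_t(x)). Then the map t ↦ ∫_{F_t(Δ)} − p(t,·)(y) · div(φ(t,·))(y) dy is differentiable at t = 0 and its derivative equals ∫_Δ [ − ṗ(x) div φ(x) − p(x) div φ̇(x) + p(x) (∇φ(x))^⊤ : ∇W(x) + div W(x) · ( − p(x) div φ(x) ) ] dx. -/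
open MeasureTheory

/-- Frobenius inner product of matrices: `A : B = ∑_{j,k} A_{jk} B_{jk}`. -/
def frob (A B : Matrix (Fin 2) (Fin 2) ℝ) : ℝ :=
  ∑ j, ∑ k, A j k * B j k

noncomputable section
local notation "E₂" => EuclideanSpace ℝ (Fin 2)

variable {F : Type*} [NormedAddCommGroup F] [NormedSpace ℝ F]

lemma hasFDerivAt_mk_right (t : ℝ) (y : E₂) :
    HasFDerivAt (fun z : E₂ => ((t, z) : ℝ × E₂)) (ContinuousLinearMap.inr ℝ ℝ E₂) y := by
  have h := (ContinuousLinearMap.inr ℝ ℝ E₂).hasFDerivAt (x := y)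
  have e : (fun z : E₂ => ((t, z) : ℝ × E₂))
      = fun z => ((t, 0) : ℝ × E₂) + (ContinuousLinearMap.inr ℝ ℝ E₂) z := by
    funext z; simp [Prod.ext_iff]
  rw [e]; exact h.const_add _

lemma fderiv_partial_s10 {f : ℝ × E₂ → F} (hf : Differentiable ℝ f) (t : ℝ) (y : E₂) :
    fderiv ℝ (fun z => f (t, z)) y
      = (fderiv ℝ f (t, y)).comp (ContinuousLinearMap.inr ℝ ℝ E₂) :=
  ((hf (t, y)).hasFDerivAt.comp y (hasFDerivAt_mk_right t y)).fderiv

end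
noncomputable section
local notation "E₂" => EuclideanSpace ℝ (Fin 2)
variable {F : Type*} [NormedAddCommGroup F] [NormedSpace ℝ F]

/-- `S φ (t,y) = div_y φ(t,·) (y)` expressed via the joint derivative. -/
noncomputable def Sfun (φ : ℝ × E₂ → E₂) (q : ℝ × E₂) : ℝ :=
  ∑ j, fderiv ℝ φ q ((0 : ℝ), EuclideanSpace.single j (1 : ℝ)) j

noncomputable def Gfun (p : ℝ × E₂ → ℝ) (φ : ℝ × E₂ → E₂) (q : ℝ × E₂) : ℝ :=
  -(p q) * Sfun φ q

lemma divg_partial {φ : ℝ × E₂ → E₂} (hφ : Differentiable ℝ φ) (t : ℝ) (y : E₂) :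
    divg (fun z => φ (t, z)) y = Sfun φ (t, y) := by
  simp [divg, jac, Matrix.trace, Matrix.diag, fderiv_partial_s10 hφ, Sfun]

lemma jac_partial {φ : ℝ × E₂ → E₂} (hφ : Differentiable ℝ φ) (t : ℝ) (y : E₂)
    (i j : Fin 2) :
    jac (fun z => φ (t, z)) y i j = fderiv ℝ φ (t, y) ((0 : ℝ), EuclideanSpace.single j 1) i := by
  simp [jac, fderiv_partial_s10 hφ]

lemma Sfun_contDiff {φ : ℝ × E₂ → E₂} (hφ : ContDiff ℝ 2 φ) : ContDiff ℝ 1 (Sfun φ) := by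
  apply ContDiff.sum (fun j _ => ?_)
  have h1 : ContDiff ℝ 1 (fun q => fderiv ℝ φ q ((0 : ℝ), EuclideanSpace.single j (1 : ℝ))) :=
    (hφ.fderiv_right (by norm_num)).clm_apply contDiff_const
  exact (EuclideanSpace.proj j : E₂ →L[ℝ] ℝ).contDiff.comp h1

lemma Gfun_contDiff {p : ℝ × E₂ → ℝ} {φ : ℝ × E₂ → E₂} (hp : ContDiff ℝ 2 p)
    (hφ : ContDiff ℝ 2 φ) : ContDiff ℝ 1 (Gfun p φ) :=
  ((hp.of_le one_le_two).neg).mul (Sfun_contDiff hφ)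

lemma hasDerivAt_curve (w : E₂) (x : E₂) (t : ℝ) :
    HasDerivAt (fun s : ℝ => ((s, x + s • w) : ℝ × E₂)) ((1 : ℝ), w) t := by
  have h2 : HasDerivAt (fun s : ℝ => x + s • w) w t := by
    simpa using ((hasDerivAt_id t).smul_const w).const_add x
  exact (hasDerivAt_id t).prodMk h2

lemma hasDerivAt_comp_curve {g : ℝ × E₂ → F} (hg : Differentiable ℝ g) (w x : E₂) (t : ℝ) :
    HasDerivAt (fun s : ℝ => g (s, x + s • w)) (fderiv ℝ g (t, x + t • w) ((1 : ℝ), w)) t :=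
  (hg _).hasFDerivAt.comp_hasDerivAt t (hasDerivAt_curve w x t)

end

noncomputable section
local notation "E₂" => EuclideanSpace ℝ (Fin 2)
variable {F : Type*} [NormedAddCommGroup F] [NormedSpace ℝ F]

lemma det_one_add_smul (t : ℝ) (A : E₂ →L[ℝ] E₂) :
    ContinuousLinearMap.det ((1 : E₂ →L[ℝ] E₂) + t • A)
      = 1 + t * Matrix.trace (Matrix.of fun i j => A (EuclideanSpace.single j (1 : ℝ)) i)
        + t ^ 2 * Matrix.det (Matrix.of fun i j => A (EuclideanSpace.single j (1 : ℝ)) i) := by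
  classical
  set b := (EuclideanSpace.basisFun (Fin 2) ℝ).toBasis
  set M : Matrix (Fin 2) (Fin 2) ℝ :=
    Matrix.of fun i j => A (EuclideanSpace.single j (1 : ℝ)) i with hM
  have hMA : LinearMap.toMatrix b b (A : E₂ →ₗ[ℝ] E₂) = M := by
    ext i j
    rw [LinearMap.toMatrix_apply]
    simp [b, hM, EuclideanSpace.basisFun_apply]
  have h1 : ContinuousLinearMap.det ((1 : E₂ →L[ℝ] E₂) + t • A)
      = Matrix.det ((1 : Matrix (Fin 2) (Fin 2) ℝ) + t • M) := by
    rw [ContinuousLinearMap.det, ← LinearMap.det_toMatrix b]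
    congr 1
    have : (((1 : E₂ →L[ℝ] E₂) + t • A : E₂ →L[ℝ] E₂) : E₂ →ₗ[ℝ] E₂)
        = (1 : E₂ →ₗ[ℝ] E₂) + t • (A : E₂ →ₗ[ℝ] E₂) := by
      ext v; simp
    rw [this, map_add, _root_.map_smul, hMA]
    congr 1
    simpa using LinearMap.toMatrix_id (R := ℝ) (v₁ := b)
  rw [h1, Matrix.det_fin_two, Matrix.trace_fin_two, Matrix.det_fin_two]
  simp [Matrix.one_apply]
  ring

lemma euclid_sum_repr (u : E₂) :
    ∑ k, u k • EuclideanSpace.single k (1 : ℝ) = u := by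
  have h := (EuclideanSpace.basisFun (Fin 2) ℝ).toBasis.sum_repr u
  simpa [EuclideanSpace.basisFun_apply] using h

lemma clm_apply_eq_sum (T : E₂ →L[ℝ] E₂) (u : E₂) (i : Fin 2) :
    T u i = ∑ k, u k * T (EuclideanSpace.single k (1 : ℝ)) i := by
  have : T u i = ((EuclideanSpace.proj i).comp T) u := rfl
  rw [this, ← euclid_sum_repr u, map_sum]
  simp [euclid_sum_repr]

end

noncomputable section
local notation "E₂" => EuclideanSpace ℝ (Fin 2)

lemma hasDerivAt_S_comp {W : E₂ → E₂} {φ : ℝ × E₂ → E₂}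
    (hW : ContDiff ℝ 1 W) (hφ : ContDiff ℝ 2 φ)
    (φ₀ φdot : E₂ → E₂)
    (hφ₀ : φ₀ = fun z => φ ((0 : ℝ), z))
    (hφdot : φdot = fun z => deriv (fun t : ℝ => φ (t, z + t • W z)) 0)
    (x : E₂) :
    HasDerivAt (fun t : ℝ => Sfun φ (t, x + t • W x))
      (divg φdot x - frob (jac φ₀ x).transpose (jac W x)) 0 := by
  have hφd : Differentiable ℝ φ := hφ.differentiable (by norm_num)
  set Φ := fderiv ℝ φ with hΦdef
  have hΦcd : ContDiff ℝ 1 Φ := hφ.fderiv_right (by norm_num)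
  have hΦd : Differentiable ℝ Φ := hΦcd.differentiable (by norm_num)
  set B := fderiv ℝ Φ ((0 : ℝ), x) with hBdef
  have hsymm : ∀ v w, B v w = B w v :=
    second_derivative_symmetric (fun y => (hφd y).hasFDerivAt) (hΦd _).hasFDerivAt
  have hγ : HasDerivAt (fun s : ℝ => Φ (s, x + s • W x)) (B ((1 : ℝ), W x)) 0 := by
    have h := hasDerivAt_comp_curve (g := Φ) hΦd (W x) x 0
    simpa using h
  have hS : HasDerivAt (fun s : ℝ => Sfun φ (s, x + s • W x))
      (∑ j, B ((1 : ℝ), W x) ((0 : ℝ), EuclideanSpace.single j 1) j) 0 := by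
    have hterm : ∀ j : Fin 2, HasDerivAt
        (fun s : ℝ => Φ (s, x + s • W x) ((0 : ℝ), EuclideanSpace.single j 1) j)
        (B ((1 : ℝ), W x) ((0 : ℝ), EuclideanSpace.single j 1) j) 0 := by
      intro j
      have h := (((EuclideanSpace.proj j).comp
        (ContinuousLinearMap.apply ℝ E₂
          (((0 : ℝ), EuclideanSpace.single j 1) : ℝ × E₂))).hasFDerivAt).comp_hasDerivAt 0 hγ
      exact h
    have := HasDerivAt.sum (fun j (_ : j ∈ Finset.univ) => hterm j)
    refine this.congr_of_eventuallyEq (Filter.Eventually.of_forall fun s => ?_)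
    simp [Sfun, hΦdef, Finset.sum_apply]
  have hφdot_eq : φdot = fun z => Φ ((0 : ℝ), z) ((1 : ℝ), W z) := by
    funext z
    rw [hφdot]
    have h := hasDerivAt_comp_curve (g := φ) hφd (W z) z 0
    simp only [zero_smul, add_zero] at h
    exact h.deriv
  have hA : HasFDerivAt (fun z : E₂ => Φ ((0 : ℝ), z))
      (B.comp (ContinuousLinearMap.inr ℝ ℝ E₂)) x :=
    (hΦd _).hasFDerivAt.comp x (hasFDerivAt_mk_right 0 x)
  have hc : HasFDerivAt (fun z : E₂ => (((1 : ℝ), W z) : ℝ × E₂))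
      ((ContinuousLinearMap.inr ℝ ℝ E₂).comp (fderiv ℝ W x)) x := by
    have h1 : HasFDerivAt (fun z : E₂ => (ContinuousLinearMap.inr ℝ ℝ E₂) (W z))
        ((ContinuousLinearMap.inr ℝ ℝ E₂).comp (fderiv ℝ W x)) x :=
      (ContinuousLinearMap.inr ℝ ℝ E₂).hasFDerivAt.comp x (hW.differentiable (by norm_num) x).hasFDerivAt
    have e : (fun z : E₂ => (((1 : ℝ), W z) : ℝ × E₂))
        = fun z => (((1 : ℝ), 0) : ℝ × E₂) + (ContinuousLinearMap.inr ℝ ℝ E₂) (W z) := by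
      funext z; simp [Prod.ext_iff]
    rw [e]; exact h1.const_add _
  have hφdotF : HasFDerivAt φdot
      ((Φ ((0 : ℝ), x)).comp ((ContinuousLinearMap.inr ℝ ℝ E₂).comp (fderiv ℝ W x))
        + (B.comp (ContinuousLinearMap.inr ℝ ℝ E₂)).flip ((1 : ℝ), W x)) x := by
    rw [hφdot_eq]; exact hA.clm_apply hc
  have hjacdot : ∀ i j, jac φdot x i j
      = Φ ((0 : ℝ), x) ((0 : ℝ), fderiv ℝ W x (EuclideanSpace.single j 1)) i
        + B ((0 : ℝ), EuclideanSpace.single j 1) ((1 : ℝ), W x) i := by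
    intro i j
    rw [jac, Matrix.of_apply, hφdotF.fderiv]
    simp
  have hjac0 : ∀ i k, Φ ((0 : ℝ), x) ((0 : ℝ), EuclideanSpace.single k 1) i = jac φ₀ x i k := by
    intro i k
    rw [hφ₀]
    exact (jac_partial hφd 0 x i k).symm
  have hdiv : divg φdot x = (∑ j, B ((1 : ℝ), W x) ((0 : ℝ), EuclideanSpace.single j 1) j)
      + frob (jac φ₀ x).transpose (jac W x) := by
    have hterm : ∀ j : Fin 2,
        Φ ((0 : ℝ), x) ((0 : ℝ), fderiv ℝ W x (EuclideanSpace.single j 1)) j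
          = ∑ k, (jac W x) k j * (jac φ₀ x) j k := by
      intro j
      have hf0 : fderiv ℝ φ₀ x = (Φ ((0 : ℝ), x)).comp (ContinuousLinearMap.inr ℝ ℝ E₂) := by
        rw [hφ₀]; exact fderiv_partial_s10 hφd 0 x
      have h1 : Φ ((0 : ℝ), x) ((0 : ℝ), fderiv ℝ W x (EuclideanSpace.single j 1)) j
          = fderiv ℝ φ₀ x (fderiv ℝ W x (EuclideanSpace.single j 1)) j := by
        rw [hf0]; simp
      rw [h1, clm_apply_eq_sum]
      refine Finset.sum_congr rfl fun k _ => ?_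
      simp [jac]
    have hs2 : ∀ j : Fin 2, B ((0 : ℝ), EuclideanSpace.single j 1) ((1 : ℝ), W x) j
        = B ((1 : ℝ), W x) ((0 : ℝ), EuclideanSpace.single j 1) j := fun j => by rw [hsymm]
    have hdiag : ∀ j : Fin 2, jac φdot x j j
        = B ((1 : ℝ), W x) ((0 : ℝ), EuclideanSpace.single j 1) j
          + ∑ k, (jac W x) k j * (jac φ₀ x) j k := by
      intro j; rw [hjacdot, hterm, hs2, add_comm]
    rw [divg, Matrix.trace]
    simp only [Matrix.diag_apply, hdiag]
    rw [Finset.sum_add_distrib]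
    congr 1
    rw [frob, Finset.sum_comm]
    exact Finset.sum_congr rfl fun j _ => Finset.sum_congr rfl fun k _ => by
      simp [Matrix.transpose_apply, mul_comm]
  rw [hdiv]
  simpa using hS

end

noncomputable section
local notation "E₂" => EuclideanSpace ℝ (Fin 2)

lemma hasDerivAt_G_comp {W : E₂ → E₂} {p : ℝ × E₂ → ℝ} {φ : ℝ × E₂ → E₂}
    (hW : ContDiff ℝ 1 W) (hp : ContDiff ℝ 2 p) (hφ : ContDiff ℝ 2 φ)
    (p₀ pdot : E₂ → ℝ) (φ₀ φdot : E₂ → E₂)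
    (hp₀ : p₀ = fun z => p ((0 : ℝ), z))
    (hpdot : pdot = fun z => deriv (fun t : ℝ => p (t, z + t • W z)) 0)
    (hφ₀ : φ₀ = fun z => φ ((0 : ℝ), z))
    (hφdot : φdot = fun z => deriv (fun t : ℝ => φ (t, z + t • W z)) 0)
    (x : E₂) :
    HasDerivAt (fun t : ℝ => Gfun p φ (t, x + t • W x))
      (-(pdot x) * divg φ₀ x
        + (-(p₀ x)) * (divg φdot x - frob (jac φ₀ x).transpose (jac W x))) 0 := by
  have hpd : Differentiable ℝ p := hp.differentiable (by norm_num)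
  have hφd : Differentiable ℝ φ := hφ.differentiable (by norm_num)
  have hd : HasDerivAt (fun t : ℝ => p (t, x + t • W x))
      (fderiv ℝ p ((0 : ℝ), x) ((1 : ℝ), W x)) 0 := by
    simpa using hasDerivAt_comp_curve hpd (W x) x 0
  have hpdx : pdot x = fderiv ℝ p ((0 : ℝ), x) ((1 : ℝ), W x) := by
    rw [hpdot]; exact hd.deriv
  have hpder : HasDerivAt (fun t : ℝ => -(p (t, x + t • W x))) (-(pdot x)) 0 := by
    rw [hpdx]; exact hd.neg
  have hSder := hasDerivAt_S_comp hW hφ φ₀ φdot hφ₀ hφdot x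
  have hmul := hpder.mul hSder
  have hS0 : Sfun φ ((0 : ℝ), x + (0 : ℝ) • W x) = divg φ₀ x := by
    rw [hφ₀]; simp [divg_partial hφd]
  have hp0 : -(p ((0 : ℝ), x + (0 : ℝ) • W x)) = -(p₀ x) := by rw [hp₀]; simp
  simp only [hS0, hp0] at hmul
  exact hmul

lemma coord_abs_le_norm (v : E₂) (i : Fin 2) : |v i| ≤ ‖v‖ := by
  have h1 : (inner ℝ (EuclideanSpace.single i (1 : ℝ)) v : ℝ) = v i := by
    rw [EuclideanSpace.inner_single_left]; simp
  have h2 := abs_real_inner_le_norm (EuclideanSpace.single i (1 : ℝ)) v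
  rw [h1, EuclideanSpace.norm_single] at h2
  simpa using h2

lemma jac_entry_abs_le {W : E₂ → E₂} {x : E₂} {C : ℝ} (hC : ‖fderiv ℝ W x‖ ≤ C)
    (i j : Fin 2) : |jac W x i j| ≤ C := by
  refine (coord_abs_le_norm _ i).trans ?_
  calc ‖fderiv ℝ W x (EuclideanSpace.single j (1 : ℝ))‖
      ≤ ‖fderiv ℝ W x‖ * ‖EuclideanSpace.single j (1 : ℝ)‖ :=
        (fderiv ℝ W x).le_opNorm _
    _ ≤ C := by rw [EuclideanSpace.norm_single]; simpa using hC

lemma divg_abs_le {W : E₂ → E₂} {x : E₂} {C : ℝ} (hC : ‖fderiv ℝ W x‖ ≤ C) :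
    |divg W x| ≤ 2 * C := by
  rw [divg, Matrix.trace_fin_two]
  calc |jac W x 0 0 + jac W x 1 1| ≤ |jac W x 0 0| + |jac W x 1 1| := abs_add_le _ _
    _ ≤ C + C := add_le_add (jac_entry_abs_le hC 0 0) (jac_entry_abs_le hC 1 1)
    _ = 2 * C := by ring

lemma detjac_abs_le {W : E₂ → E₂} {x : E₂} {C : ℝ} (hC : ‖fderiv ℝ W x‖ ≤ C) :
    |Matrix.det (jac W x)| ≤ 2 * C ^ 2 := by
  have h0 : (0:ℝ) ≤ C := le_trans (abs_nonneg _) (jac_entry_abs_le hC 0 0)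
  rw [Matrix.det_fin_two]
  calc |jac W x 0 0 * jac W x 1 1 - jac W x 0 1 * jac W x 1 0|
      ≤ |jac W x 0 0 * jac W x 1 1| + |jac W x 0 1 * jac W x 1 0| := abs_sub _ _
    _ ≤ C * C + C * C := by
        rw [abs_mul, abs_mul]
        gcongr <;> first | exact jac_entry_abs_le hC _ _ | positivity
    _ = 2 * C ^ 2 := by ring

lemma continuous_jac_entry {W : E₂ → E₂} (hW : ContDiff ℝ 1 W) (i j : Fin 2) :
    Continuous fun x => jac W x i j := by
  have h1 : Continuous fun x => fderiv ℝ W x (EuclideanSpace.single j (1 : ℝ)) :=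
    (hW.continuous_fderiv (by norm_num)).clm_apply continuous_const
  exact (EuclideanSpace.proj i).continuous.comp h1

lemma continuous_divg {W : E₂ → E₂} (hW : ContDiff ℝ 1 W) : Continuous (divg W) := by
  have : divg W = fun x => jac W x 0 0 + jac W x 1 1 := by
    funext x; rw [divg, Matrix.trace_fin_two]
  rw [this]
  exact (continuous_jac_entry hW 0 0).add (continuous_jac_entry hW 1 1)

lemma continuous_detjac {W : E₂ → E₂} (hW : ContDiff ℝ 1 W) :
    Continuous fun x => Matrix.det (jac W x) := by
  have : (fun x => Matrix.det (jac W x))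
      = fun x => jac W x 0 0 * jac W x 1 1 - jac W x 0 1 * jac W x 1 0 := by
    funext x; rw [Matrix.det_fin_two]
  rw [this]
  exact ((continuous_jac_entry hW 0 0).mul (continuous_jac_entry hW 1 1)).sub
    ((continuous_jac_entry hW 0 1).mul (continuous_jac_entry hW 1 0))

lemma hasDerivAt_poly (a b t : ℝ) :
    HasDerivAt (fun s : ℝ => 1 + s * a + s ^ 2 * b) (a + 2 * t * b) t := by
  have h1 : HasDerivAt (fun s : ℝ => s * a) a t := by
    simpa using (hasDerivAt_id t).mul_const a
  have h2 : HasDerivAt (fun s : ℝ => s ^ 2 * b) (2 * t * b) t := by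
    simpa using (hasDerivAt_pow 2 t).mul_const b
  have := ((hasDerivAt_const t (1 : ℝ)).add h1).add h2
  rw [zero_add] at this
  exact this

lemma hasFDerivAt_perturb {W : E₂ → E₂} (hW : ContDiff ℝ 1 W) (t : ℝ) (x : E₂) :
    HasFDerivAt (fun y => y + t • W y) ((1 : E₂ →L[ℝ] E₂) + t • fderiv ℝ W x) x := by
  exact (hasFDerivAt_id x).add (((hW.differentiable (by norm_num) x).hasFDerivAt).const_smul t)

lemma aux_poly_pos {a b t ε Cd : ℝ} (h1 : |a| ≤ 2 * Cd) (h2 : |b| ≤ 2 * Cd ^ 2)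
    (ht : |t| ≤ ε) (hε1 : ε ≤ 1) (hε0 : 0 < ε) (hCd0 : 0 ≤ Cd)
    (hεC : ε ≤ 1 / (2 * (2 * Cd + 2 * Cd ^ 2 + 1))) :
    (1 / 2 : ℝ) ≤ 1 + t * a + t ^ 2 * b := by
  have ht1 : |t| ≤ 1 := ht.trans hε1
  have hεS : ε * (2 * (2 * Cd + 2 * Cd ^ 2 + 1)) ≤ 1 := by
    have hc : (0 : ℝ) < 2 * (2 * Cd + 2 * Cd ^ 2 + 1) := by positivity
    exact (le_div_iff₀ hc).1 hεC
  have hta : |t * a| ≤ |t| * (2 * Cd) := by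
    rw [abs_mul]; exact mul_le_mul_of_nonneg_left h1 (abs_nonneg t)
  have htb : |t ^ 2 * b| ≤ |t| * (2 * Cd ^ 2) := by
    rw [abs_mul, abs_pow]
    calc |t| ^ 2 * |b| ≤ |t| ^ 2 * (2 * Cd ^ 2) :=
          mul_le_mul_of_nonneg_left h2 (by positivity)
      _ ≤ |t| * (2 * Cd ^ 2) := by
          nlinarith [mul_nonneg (mul_nonneg (abs_nonneg t) (sub_nonneg.2 ht1))
            (show (0:ℝ) ≤ 2 * Cd ^ 2 by positivity)]
  have habs : |t * a + t ^ 2 * b| ≤ 1 / 2 := by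
    calc |t * a + t ^ 2 * b| ≤ |t * a| + |t ^ 2 * b| := abs_add_le _ _
      _ ≤ |t| * (2 * Cd) + |t| * (2 * Cd ^ 2) := add_le_add hta htb
      _ = |t| * (2 * Cd + 2 * Cd ^ 2) := by ring
      _ ≤ ε * (2 * Cd + 2 * Cd ^ 2) := mul_le_mul_of_nonneg_right ht (by positivity)
      _ ≤ 1 / 2 := by nlinarith
  have := neg_abs_le (t * a + t ^ 2 * b)
  linarith

lemma aux_inj {W : E₂ → E₂} {K : NNReal} (hK : LipschitzWith K W) {t ε : ℝ}
    (ht : |t| ≤ ε) (hεK : ε ≤ 1 / (2 * ((K : ℝ) + 1))) {x y : E₂}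
    (hxy : x + t • W x = y + t • W y) : x = y := by
  have hsub : x - y = t • (W y - W x) := by
    rw [smul_sub]
    linear_combination (norm := module) hxy
  have hn : ‖x - y‖ ≤ |t| * ((K : ℝ) * ‖x - y‖) := by
    calc ‖x - y‖ = |t| * ‖W y - W x‖ := by rw [hsub, norm_smul, Real.norm_eq_abs]
      _ ≤ |t| * ((K : ℝ) * ‖x - y‖) := by
          refine mul_le_mul_of_nonneg_left ?_ (abs_nonneg t)
          have h := hK.dist_le_mul y x
          rw [dist_eq_norm, dist_eq_norm] at h
          calc ‖W y - W x‖ ≤ (K : ℝ) * ‖y - x‖ := h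
            _ = (K : ℝ) * ‖x - y‖ := by rw [norm_sub_rev]
  have htK : |t| * (K : ℝ) ≤ 1 / 2 := by
    have hc : (0 : ℝ) < 2 * ((K : ℝ) + 1) := by positivity
    have h2 := (le_div_iff₀ hc).1 hεK
    have h3 : |t| ≤ ε := ht
    nlinarith [abs_nonneg t, K.coe_nonneg]
  have h0 : ‖x - y‖ ≤ 0 := by nlinarith [norm_nonneg (x - y)]
  have := le_antisymm h0 (norm_nonneg _)
  rwa [norm_eq_zero, sub_eq_zero] at this

set_option maxHeartbeats 1000000 in
/-- Shape derivative of the pressure term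
`t ↦ ∫_{F_t(Δ)} − p(t,·) div(φ(t,·)) dy`. -/
theorem shape_derivative_L4
    (W : EuclideanSpace ℝ (Fin 2) → EuclideanSpace ℝ (Fin 2))
    (hW : ContDiff ℝ 1 W) (hWc : HasCompactSupport W)
    (Δ : Set (EuclideanSpace ℝ (Fin 2))) (hΔm : MeasurableSet Δ)
    (hΔb : Bornology.IsBounded Δ)
    (p : ℝ × EuclideanSpace ℝ (Fin 2) → ℝ)
    (φ : ℝ × EuclideanSpace ℝ (Fin 2) → EuclideanSpace ℝ (Fin 2))
    (hp : ContDiff ℝ 2 p) (hφ : ContDiff ℝ 2 φ)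
    (p₀ : EuclideanSpace ℝ (Fin 2) → ℝ) (pdot : EuclideanSpace ℝ (Fin 2) → ℝ)
    (φ₀ φdot : EuclideanSpace ℝ (Fin 2) → EuclideanSpace ℝ (Fin 2))
    (hp₀ : p₀ = fun z => p ((0 : ℝ), z))
    (hpdot : pdot = fun z => deriv (fun t : ℝ => p (t, z + t • W z)) 0)
    (hφ₀ : φ₀ = fun z => φ ((0 : ℝ), z))
    (hφdot : φdot = fun z => deriv (fun t : ℝ => φ (t, z + t • W z)) 0) :
    HasDerivAt
      (fun t : ℝ => ∫ y in (fun x => x + t • W x) '' Δ,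
        -(p (t, y)) * divg (fun z => φ (t, z)) y)
      (∫ x in Δ,
        (-(pdot x) * divg φ₀ x
          - p₀ x * divg φdot x
          + p₀ x * frob (jac φ₀ x).transpose (jac W x)
          + divg W x * (-(p₀ x) * divg φ₀ x))) (0 : ℝ) := by
  classical
  have hWd : Differentiable ℝ W := hW.differentiable (by norm_num)
  have hpd : Differentiable ℝ p := hp.differentiable (by norm_num)
  have hφd : Differentiable ℝ φ := hφ.differentiable (by norm_num)
  set G : ℝ × EuclideanSpace ℝ (Fin 2) → ℝ := Gfun p φ with hGdef
  have hGcd : ContDiff ℝ 1 G := Gfun_contDiff hp hφ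
  have hGc : Continuous G := hGcd.continuous
  have hGd : Differentiable ℝ G := hGcd.differentiable (by norm_num)
  have hG'c : Continuous (fderiv ℝ G) := hGcd.continuous_fderiv (by norm_num)
  obtain ⟨K, hK⟩ := hW.lipschitzWith_of_hasCompactSupport hWc (by norm_num)
  obtain ⟨CW, hCW⟩ := hWc.exists_bound_of_continuous hW.continuous
  have hCW0 : 0 ≤ CW := le_trans (norm_nonneg _) (hCW 0)
  obtain ⟨Cd, hCd⟩ := (hWc.fderiv ℝ).exists_bound_of_continuous (hW.continuous_fderiv (by norm_num))
  have hCd0 : 0 ≤ Cd := le_trans (norm_nonneg _) (hCd 0)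
  obtain ⟨RΔ, hRΔ⟩ := (Metric.isBounded_iff_subset_closedBall 0).1 hΔb
  set R : ℝ := |RΔ| + CW + 1 with hRdef
  have hR0 : 0 ≤ R := by positivity
  set T : Set (ℝ × EuclideanSpace ℝ (Fin 2)) :=
    Set.Icc (-1 : ℝ) 1 ×ˢ Metric.closedBall 0 R with hTdef
  have hTc : IsCompact T := isCompact_Icc.prod (isCompact_closedBall _ _)
  have hT0 : ((0 : ℝ), (0 : EuclideanSpace ℝ (Fin 2))) ∈ T := by
    constructor
    · simp
    · simpa using hR0
  obtain ⟨CG, hCG⟩ := hTc.exists_bound_of_continuousOn hGc.continuousOn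
  obtain ⟨CG', hCG'⟩ := hTc.exists_bound_of_continuousOn hG'c.continuousOn
  have hCG0 : 0 ≤ CG := le_trans (norm_nonneg _) (hCG _ hT0)
  have hCG'0 : 0 ≤ CG' := le_trans (norm_nonneg _) (hCG' _ hT0)
  set ε : ℝ := min (1 / (2 * ((K : ℝ) + 1))) (min 1 (1 / (2 * (2 * Cd + 2 * Cd ^ 2 + 1))))
    with hεdef
  have hK0 : (0 : ℝ) ≤ (K : ℝ) := K.coe_nonneg
  have hε : 0 < ε := by
    refine lt_min (by positivity) (lt_min one_pos (by positivity))
  have hε1 : ε ≤ 1 := le_trans (min_le_right _ _) (min_le_left _ _)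
  have hεK : ε ≤ 1 / (2 * ((K : ℝ) + 1)) := min_le_left _ _
  have hεC : ε ≤ 1 / (2 * (2 * Cd + 2 * Cd ^ 2 + 1)) :=
    le_trans (min_le_right _ _) (min_le_right _ _)
  have hb_pos : ∀ (x : EuclideanSpace ℝ (Fin 2)) (t : ℝ), |t| ≤ ε →
      (1 / 2 : ℝ) ≤ 1 + t * divg W x + t ^ 2 * Matrix.det (jac W x) :=
    fun x t ht => aux_poly_pos (divg_abs_le (hCd x)) (detjac_abs_le (hCd x)) ht hε1 hε hCd0 hεC
  have hInj : ∀ t : ℝ, |t| ≤ ε → Set.InjOn (fun x => x + t • W x) Δ :=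
    fun t ht x _ y _ hxy => aux_inj hK ht hεK hxy
  -- membership in the compact set
  have memT : ∀ x ∈ Δ, ∀ t : ℝ, |t| ≤ 1 →
      ((t, x + t • W x) : ℝ × EuclideanSpace ℝ (Fin 2)) ∈ T := by
    intro x hx t ht
    constructor
    · simp only [Set.mem_Icc]
      constructor <;> [linarith [neg_abs_le t]; linarith [le_abs_self t]]
    · have hxn : ‖x‖ ≤ RΔ := by simpa using hRΔ hx
      have h1 : ‖x + t • W x‖ ≤ ‖x‖ + |t| * ‖W x‖ := by
        refine (norm_add_le _ _).trans ?_
        rw [norm_smul, Real.norm_eq_abs]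
      have h2 : ‖x + t • W x‖ ≤ |RΔ| + CW := by
        have h3 := hCW x
        have h4 := le_abs_self RΔ
        have h5 := abs_nonneg t
        have h6 := norm_nonneg (W x)
        nlinarith
      simp only [Metric.mem_closedBall, dist_zero_right]
      rw [hRdef]; linarith
  -- definitions of the integrand families
  set F : ℝ → EuclideanSpace ℝ (Fin 2) → ℝ := fun t x =>
    (1 + t * divg W x + t ^ 2 * Matrix.det (jac W x)) * G (t, x + t • W x) with hFdef
  set F' : ℝ → EuclideanSpace ℝ (Fin 2) → ℝ := fun t x =>
    (divg W x + 2 * t * Matrix.det (jac W x)) * G (t, x + t • W x)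
      + (1 + t * divg W x + t ^ 2 * Matrix.det (jac W x))
          * (fderiv ℝ G (t, x + t • W x) ((1 : ℝ), W x)) with hF'def
  have hcurvec : ∀ t : ℝ, Continuous fun x : EuclideanSpace ℝ (Fin 2) =>
      ((t, x + t • W x) : ℝ × EuclideanSpace ℝ (Fin 2)) := fun t =>
    continuous_const.prodMk (continuous_id.add (hW.continuous.const_smul t))
  have hFcont : ∀ t, Continuous (F t) := by
    intro t
    apply Continuous.mul
    · exact ((continuous_const.add (continuous_const.mul (continuous_divg hW))).add
        (continuous_const.mul (continuous_detjac hW)))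
    · exact hGc.comp (hcurvec t)
  have hF'0cont : Continuous (F' 0) := by
    apply Continuous.add
    · exact ((continuous_divg hW).add (continuous_const.mul (continuous_detjac hW))).mul
        (hGc.comp (hcurvec 0))
    · refine Continuous.mul ?_ ?_
      · exact ((continuous_const.add (continuous_const.mul (continuous_divg hW))).add
          (continuous_const.mul (continuous_detjac hW)))
      · exact (hG'c.comp (hcurvec 0)).clm_apply (continuous_const.prodMk hW.continuous)
  -- bound on F
  have hFb : ∀ t : ℝ, |t| ≤ 1 → ∀ x ∈ Δ, ‖F t x‖ ≤ (1 + 2 * Cd + 2 * Cd ^ 2) * CG := by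
    intro t ht x hx
    have hmem := memT x hx t ht
    have hGb := hCG _ hmem
    have ha : |divg W x| ≤ 2 * Cd := divg_abs_le (hCd x)
    have hb : |Matrix.det (jac W x)| ≤ 2 * Cd ^ 2 := detjac_abs_le (hCd x)
    have h2 : |1 + t * divg W x + t ^ 2 * Matrix.det (jac W x)|
        ≤ 1 + 2 * Cd + 2 * Cd ^ 2 := by
      have e1 : |t * divg W x| ≤ 2 * Cd := by
        rw [abs_mul]
        calc |t| * |divg W x| ≤ 1 * |divg W x| :=
              mul_le_mul_of_nonneg_right ht (abs_nonneg _)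
          _ = |divg W x| := one_mul _
          _ ≤ 2 * Cd := ha
      have e2 : |t ^ 2 * Matrix.det (jac W x)| ≤ 2 * Cd ^ 2 := by
        rw [abs_mul, abs_pow]
        have h1le : |t| ^ 2 ≤ 1 := by
          calc |t| ^ 2 ≤ 1 ^ 2 := pow_le_pow_left₀ (abs_nonneg t) ht 2
            _ = 1 := one_pow 2
        calc |t| ^ 2 * |Matrix.det (jac W x)| ≤ 1 * |Matrix.det (jac W x)| :=
              mul_le_mul_of_nonneg_right h1le (abs_nonneg _)
          _ = |Matrix.det (jac W x)| := one_mul _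
          _ ≤ 2 * Cd ^ 2 := hb
      calc |1 + t * divg W x + t ^ 2 * Matrix.det (jac W x)|
          ≤ |1 + t * divg W x| + |t ^ 2 * Matrix.det (jac W x)| := abs_add_le _ _
        _ ≤ (|(1 : ℝ)| + |t * divg W x|) + |t ^ 2 * Matrix.det (jac W x)| := by
            exact add_le_add (abs_add_le _ _) le_rfl
        _ ≤ 1 + 2 * Cd + 2 * Cd ^ 2 := by
            rw [abs_one]; linarith
    rw [hFdef]
    simp only [norm_mul, Real.norm_eq_abs]
    exact mul_le_mul h2 (by simpa [Real.norm_eq_abs] using hGb) (abs_nonneg _) (by positivity)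
  have hFint : Integrable (F 0) (Measure.restrict volume Δ) := by
    refine Measure.integrableOn_of_bounded (M := (1 + 2 * Cd + 2 * Cd ^ 2) * CG) hΔb.measure_lt_top.ne
      ((hFcont 0).aestronglyMeasurable) ?_
    exact (ae_restrict_iff' hΔm).2 (Filter.Eventually.of_forall fun x hx =>
      hFb 0 (by simp) x hx)
  -- bound on F'
  set Cb2 : ℝ := (2 * Cd + 4 * Cd ^ 2) * CG
      + (1 + 2 * Cd + 2 * Cd ^ 2) * (CG' * (1 + CW)) with hCb2def
  have hbound : ∀ x ∈ Δ, ∀ t ∈ Metric.ball (0 : ℝ) ε, ‖F' t x‖ ≤ Cb2 := by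
    intro x hx t htb
    have ht : |t| ≤ ε := by
      rw [Metric.mem_ball, dist_zero_right, Real.norm_eq_abs] at htb; exact htb.le
    have ht1 : |t| ≤ 1 := ht.trans hε1
    have hmem := memT x hx t ht1
    have hGb : |G (t, x + t • W x)| ≤ CG := by
      simpa [Real.norm_eq_abs] using hCG _ hmem
    have hG'b : ‖fderiv ℝ G (t, x + t • W x)‖ ≤ CG' := hCG' _ hmem
    have ha : |divg W x| ≤ 2 * Cd := divg_abs_le (hCd x)
    have hb : |Matrix.det (jac W x)| ≤ 2 * Cd ^ 2 := detjac_abs_le (hCd x)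
    have h1 : |divg W x + 2 * t * Matrix.det (jac W x)| ≤ 2 * Cd + 4 * Cd ^ 2 := by
      have e2 : |2 * t * Matrix.det (jac W x)| ≤ 4 * Cd ^ 2 := by
        rw [abs_mul, abs_mul, abs_two]
        calc 2 * |t| * |Matrix.det (jac W x)| ≤ 2 * 1 * (2 * Cd ^ 2) := by
              refine mul_le_mul ?_ hb (abs_nonneg _) (by positivity)
              exact mul_le_mul_of_nonneg_left ht1 (by norm_num)
          _ = 4 * Cd ^ 2 := by ring
      calc |divg W x + 2 * t * Matrix.det (jac W x)|
          ≤ |divg W x| + |2 * t * Matrix.det (jac W x)| := abs_add_le _ _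
        _ ≤ 2 * Cd + 4 * Cd ^ 2 := add_le_add ha e2
    have h2 : |1 + t * divg W x + t ^ 2 * Matrix.det (jac W x)|
        ≤ 1 + 2 * Cd + 2 * Cd ^ 2 := by
      have e1 : |t * divg W x| ≤ 2 * Cd := by
        rw [abs_mul]
        calc |t| * |divg W x| ≤ 1 * |divg W x| :=
              mul_le_mul_of_nonneg_right ht1 (abs_nonneg _)
          _ ≤ 2 * Cd := by rw [one_mul]; exact ha
      have e2 : |t ^ 2 * Matrix.det (jac W x)| ≤ 2 * Cd ^ 2 := by
        rw [abs_mul, abs_pow]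
        have h1le : |t| ^ 2 ≤ 1 := by
          calc |t| ^ 2 ≤ 1 ^ 2 := pow_le_pow_left₀ (abs_nonneg t) ht1 2
            _ = 1 := one_pow 2
        calc |t| ^ 2 * |Matrix.det (jac W x)| ≤ 1 * |Matrix.det (jac W x)| :=
              mul_le_mul_of_nonneg_right h1le (abs_nonneg _)
          _ ≤ 2 * Cd ^ 2 := by rw [one_mul]; exact hb
      calc |1 + t * divg W x + t ^ 2 * Matrix.det (jac W x)|
          ≤ |(1 : ℝ) + t * divg W x| + |t ^ 2 * Matrix.det (jac W x)| := abs_add_le _ _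
        _ ≤ (|(1 : ℝ)| + |t * divg W x|) + |t ^ 2 * Matrix.det (jac W x)| :=
            add_le_add (abs_add_le _ _) le_rfl
        _ ≤ 1 + 2 * Cd + 2 * Cd ^ 2 := by rw [abs_one]; linarith
    have h3 : ‖fderiv ℝ G (t, x + t • W x) ((1 : ℝ), W x)‖ ≤ CG' * (1 + CW) := by
      refine ((fderiv ℝ G _).le_opNorm _).trans ?_
      have hn : ‖(((1 : ℝ), W x) : ℝ × EuclideanSpace ℝ (Fin 2))‖ ≤ 1 + CW := by
        rw [Prod.norm_def]
        refine max_le ?_ ?_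
        · simpa using hCW0
        · exact (hCW x).trans (by linarith)
      exact mul_le_mul hG'b hn (norm_nonneg _) hCG'0
    rw [hF'def]
    simp only [Real.norm_eq_abs]
    calc |(divg W x + 2 * t * Matrix.det (jac W x)) * G (t, x + t • W x)
          + (1 + t * divg W x + t ^ 2 * Matrix.det (jac W x))
              * (fderiv ℝ G (t, x + t • W x) ((1 : ℝ), W x))|
        ≤ |(divg W x + 2 * t * Matrix.det (jac W x)) * G (t, x + t • W x)|
          + |(1 + t * divg W x + t ^ 2 * Matrix.det (jac W x))
              * (fderiv ℝ G (t, x + t • W x) ((1 : ℝ), W x))| := abs_add_le _ _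
      _ ≤ (2 * Cd + 4 * Cd ^ 2) * CG
          + (1 + 2 * Cd + 2 * Cd ^ 2) * (CG' * (1 + CW)) := by
          refine add_le_add ?_ ?_
          · rw [abs_mul]
            exact mul_le_mul h1 hGb (abs_nonneg _) (by positivity)
          · rw [abs_mul]
            refine mul_le_mul h2 ?_ (abs_nonneg _) (by positivity)
            simpa [Real.norm_eq_abs] using h3
      _ = Cb2 := by rw [hCb2def]
  -- differentiation under the integral sign
  have key := hasDerivAt_integral_of_dominated_loc_of_deriv_le
    (μ := Measure.restrict volume Δ) (F := F) (F' := F') (x₀ := (0 : ℝ))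
    (bound := fun _ => Cb2) (Metric.ball_mem_nhds 0 hε)
    (Filter.Eventually.of_forall fun t => (hFcont t).aestronglyMeasurable)
    hFint hF'0cont.aestronglyMeasurable
    ((ae_restrict_iff' hΔm).2 (Filter.Eventually.of_forall hbound))
    (integrableOn_const hΔb.measure_lt_top.ne)
    (Filter.Eventually.of_forall fun x => fun t _ =>
      (hasDerivAt_poly (divg W x) (Matrix.det (jac W x)) t).mul
        (hasDerivAt_comp_curve hGd (W x) x t))
  obtain ⟨-, hder⟩ := key
  -- identify the derivative integrand
  have hval : ∀ x : EuclideanSpace ℝ (Fin 2), F' 0 x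
      = -(pdot x) * divg φ₀ x - p₀ x * divg φdot x
        + p₀ x * frob (jac φ₀ x).transpose (jac W x)
        + divg W x * (-(p₀ x) * divg φ₀ x) := by
    intro x
    have h1 : HasDerivAt (fun s : ℝ => G (s, x + s • W x))
        (fderiv ℝ G ((0 : ℝ), x + (0 : ℝ) • W x) ((1 : ℝ), W x)) 0 :=
      hasDerivAt_comp_curve hGd (W x) x 0
    have h2 := hasDerivAt_G_comp hW hp hφ p₀ pdot φ₀ φdot hp₀ hpdot hφ₀ hφdot x
    have huniq : fderiv ℝ G ((0 : ℝ), x + (0 : ℝ) • W x) ((1 : ℝ), W x)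
        = -(pdot x) * divg φ₀ x
          + (-(p₀ x)) * (divg φdot x - frob (jac φ₀ x).transpose (jac W x)) :=
      h1.unique h2
    have hG0 : G ((0 : ℝ), x + (0 : ℝ) • W x) = -(p₀ x) * divg φ₀ x := by
      have hx0 : x + (0 : ℝ) • W x = x := by simp
      rw [hx0]
      show -(p ((0 : ℝ), x)) * Sfun φ ((0 : ℝ), x) = -(p₀ x) * divg φ₀ x
      simp only [hp₀, hφ₀, divg_partial hφd]
    rw [hF'def]
    simp only
    rw [huniq, hG0]
    ring
  have hintval : (∫ x in Δ, F' 0 x) = ∫ x in Δ,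
      (-(pdot x) * divg φ₀ x - p₀ x * divg φdot x
        + p₀ x * frob (jac φ₀ x).transpose (jac W x)
        + divg W x * (-(p₀ x) * divg φ₀ x)) :=
    integral_congr_ae (Filter.Eventually.of_forall fun x => hval x)
  rw [hintval] at hder
  -- change of variables for small t
  have hCoV : ∀ t : ℝ, |t| ≤ ε →
      (∫ y in (fun x => x + t • W x) '' Δ,
        -(p (t, y)) * divg (fun z => φ (t, z)) y) = ∫ x in Δ, F t x := by
    intro t ht
    have hfd : ∀ x ∈ Δ, HasFDerivWithinAt (fun y => y + t • W y)
        ((1 : EuclideanSpace ℝ (Fin 2) →L[ℝ] EuclideanSpace ℝ (Fin 2))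
          + t • fderiv ℝ W x) Δ x :=
      fun x _ => (hasFDerivAt_perturb hW t x).hasFDerivWithinAt
    rw [integral_image_eq_integral_abs_det_fderiv_smul volume hΔm hfd (hInj t ht)]
    refine integral_congr_ae (Filter.Eventually.of_forall fun x => ?_)
    rw [hFdef]
    simp only
    have hdet : ContinuousLinearMap.det
        ((1 : EuclideanSpace ℝ (Fin 2) →L[ℝ] EuclideanSpace ℝ (Fin 2))
          + t • fderiv ℝ W x)
        = 1 + t * divg W x + t ^ 2 * Matrix.det (jac W x) := by
      rw [det_one_add_smul]; rfl
    rw [hdet, abs_of_pos (lt_of_lt_of_le (by norm_num) (hb_pos x t ht)), smul_eq_mul]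
    congr 1
    rw [divg_partial hφd]
    rfl
  refine hder.congr_of_eventuallyEq ?_
  filter_upwards [Metric.ball_mem_nhds (0 : ℝ) hε] with t ht
  have ht' : |t| ≤ ε := by
    rw [Metric.mem_ball, dist_zero_right, Real.norm_eq_abs] at ht; exact ht.le
  exact hCoV t ht'
end
end
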